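/- Monotonicity of the leader selection objective: for the grounded Laplacian of a connected weighted graph, if S ⊆ T are nonempty vertex sets, then tr((L_T)^{-1}) ≤ tr((L_S)^{-1}), where L_S denotes L with rows and columns of S removed. -/

import Mathlib

open Matrix Finset

/-- Weighted Laplacian of a graph on `Fin n` given by a symmetric weight function. -/
def weightedLaplacian {n : ℕ} (w : Fin n → Fin n → ℝ) : Matrix (Fin n) (Fin n) ℝ :=
  Matrix.of fun i j => if i = j then ∑ k, w i k else -(w i j)

section Ext

variable {l m : Type*} [Fintype l] [Fintype m] [DecidableEq l] [DecidableEq m]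

/-- Extension of a vector along an injection, by zero. -/
noncomputable def extVec (f : l → m) (y : l → ℝ) : m → ℝ :=
  fun j => ∑ k, if f k = j then y k else 0

lemma extVec_dot (f : l → m) (y : l → ℝ) (g : m → ℝ) :
    extVec f y ⬝ᵥ g = ∑ k, y k * g (f k) := by
  unfold extVec dotProduct
  simp only [Finset.sum_mul, ite_mul, zero_mul]
  rw [Finset.sum_comm]
  simp [Finset.sum_ite_eq]

lemma extVec_apply (f : l → m) (hf : Function.Injective f) (y : l → ℝ) (i : l) :
    extVec f y (f i) = y i := by
  unfold extVec
  rw [Finset.sum_eq_single i] <;> simp_all [hf.eq_iff]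

lemma extVec_apply_notMem (f : l → m) (y : l → ℝ) {j : m} (hj : ∀ k, f k ≠ j) :
    extVec f y j = 0 := by
  unfold extVec
  exact Finset.sum_eq_zero fun k _ => by simp [hj k]

lemma mulVec_extVec (A : Matrix m m ℝ) (f : l → m) (y : l → ℝ) (a : m) :
    (A *ᵥ extVec f y) a = ∑ k, A a (f k) * y k := by
  unfold extVec mulVec dotProduct
  simp only [Finset.mul_sum, mul_ite, mul_zero]
  rw [Finset.sum_comm]
  simp [Finset.sum_ite_eq]

lemma extVec_quad (A : Matrix m m ℝ) (f : l → m) (y : l → ℝ) :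
    extVec f y ⬝ᵥ (A *ᵥ extVec f y) = y ⬝ᵥ (A.submatrix f f *ᵥ y) := by
  rw [extVec_dot, dotProduct]
  apply Finset.sum_congr rfl
  intro k _
  congr 1
  rw [mulVec_extVec]
  simp [mulVec, dotProduct, submatrix_apply]

end Ext

section Var

variable {m : Type*} [Fintype m] [DecidableEq m]

/-- The variational inequality: `2⟨z,x⟩ - ⟨z,Az⟩ ≤ ⟨x, A⁻¹x⟩` for positive definite `A`. -/
lemma var_ineq {A : Matrix m m ℝ} (hA : A.PosDef) (x z : m → ℝ) :
    2 * (z ⬝ᵥ x) - z ⬝ᵥ (A *ᵥ z) ≤ x ⬝ᵥ (A⁻¹ *ᵥ x) := by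
  have hinv : A * A⁻¹ = 1 := Matrix.mul_nonsing_inv A (isUnit_iff_ne_zero.mpr hA.det_pos.ne')
  have hAsymm : Aᵀ = A := by
    ext i j
    have h := congrFun (congrFun hA.isHermitian i) j
    simpa [Matrix.conjTranspose_apply] using h
  set d : m → ℝ := z - A⁻¹ *ᵥ x with hd
  have h0 : 0 ≤ d ⬝ᵥ (A *ᵥ d) := by
    have := hA.posSemidef.dotProduct_mulVec_nonneg d
    simpa using this
  have e1 : A *ᵥ (A⁻¹ *ᵥ x) = x := by
    rw [mulVec_mulVec, hinv, one_mulVec]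
  have e2 : (A⁻¹ *ᵥ x) ⬝ᵥ (A *ᵥ z) = x ⬝ᵥ z := by
    rw [dotProduct_mulVec, ← mulVec_transpose, hAsymm, e1]
  have e3 : (A⁻¹ *ᵥ x) ⬝ᵥ (A *ᵥ (A⁻¹ *ᵥ x)) = x ⬝ᵥ (A⁻¹ *ᵥ x) := by
    rw [e1, dotProduct_comm]
  have expand : d ⬝ᵥ (A *ᵥ d)
      = z ⬝ᵥ (A *ᵥ z) - z ⬝ᵥ x - x ⬝ᵥ z + x ⬝ᵥ (A⁻¹ *ᵥ x) := by
    have h4 : A *ᵥ d = A *ᵥ z - x := by rw [hd, mulVec_sub, e1]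
    rw [hd, h4, sub_dotProduct, dotProduct_sub, dotProduct_sub, e2,
      dotProduct_comm (A⁻¹ *ᵥ x) x]
    ring
  have hcomm : x ⬝ᵥ z = z ⬝ᵥ x := dotProduct_comm x z
  rw [expand, hcomm] at h0
  linarith

/-- Diagonal entries of a positive definite matrix are positive. -/
lemma posDef_diag_pos {A : Matrix m m ℝ} (hA : A.PosDef) (i : m) : 0 < A i i := by
  have := hA.dotProduct_mulVec_pos (x := Pi.single i (1:ℝ)) (by intro h; simpa using congrFun h i)
  simpa [dotProduct, mulVec, Pi.single_apply] using this

/-- Trace monotonicity for inverses of nested principal submatrices. -/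
lemma trace_inv_le {l : Type*} [Fintype l] [DecidableEq l]
    {A : Matrix m m ℝ} (hA : A.PosDef) (f : l → m) (hf : Function.Injective f)
    (hB : (A.submatrix f f).PosDef) :
    ((A.submatrix f f)⁻¹).trace ≤ A⁻¹.trace := by
  set B := A.submatrix f f with hBdef
  have hBinv : B * B⁻¹ = 1 := Matrix.mul_nonsing_inv B (isUnit_iff_ne_zero.mpr hB.det_pos.ne')
  have hdiag : ∀ i : l, B⁻¹ i i ≤ A⁻¹ (f i) (f i) := by
    intro i
    set y : l → ℝ := fun k => B⁻¹ k i with hy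
    set z : m → ℝ := extVec f y with hz
    have h1 : z ⬝ᵥ Pi.single (f i) 1 = B⁻¹ i i := by
      rw [dotProduct_single, hz, extVec_apply f hf, mul_one]
    have h2 : z ⬝ᵥ (A *ᵥ z) = B⁻¹ i i := by
      rw [hz, extVec_quad, ← hBdef]
      have : B *ᵥ y = fun a => (B * B⁻¹) a i := by
        funext a
        simp [mulVec, dotProduct, Matrix.mul_apply, hy]
      rw [this, hBinv]
      simp [dotProduct, Matrix.one_apply, hy, Finset.sum_ite_eq']
    have h3 : Pi.single (f i) 1 ⬝ᵥ (A⁻¹ *ᵥ Pi.single (f i) 1) = A⁻¹ (f i) (f i) := by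
      simp [single_dotProduct, mulVec_single]
    have := var_ineq hA (Pi.single (f i) 1) z
    rw [h1, h2, h3] at this
    linarith
  have hAinv : A⁻¹.PosDef := hA.inv
  calc ((B)⁻¹).trace = ∑ i, B⁻¹ i i := rfl
    _ ≤ ∑ i, A⁻¹ (f i) (f i) := Finset.sum_le_sum fun i _ => hdiag i
    _ = ∑ j ∈ Finset.univ.image f, A⁻¹ j j := by
        rw [Finset.sum_image (fun a _ b _ h => hf h)]
    _ ≤ ∑ j, A⁻¹ j j := Finset.sum_le_sum_of_subset_of_nonneg
        (Finset.subset_univ _) (fun j _ _ => (posDef_diag_pos hAinv j).le)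
    _ = A⁻¹.trace := rfl

end Var

section Lap

variable {n : ℕ} (w : Fin n → Fin n → ℝ)

lemma wl_mulVec (hdiag : ∀ i, w i i = 0) (x : Fin n → ℝ) (i : Fin n) :
    (weightedLaplacian w *ᵥ x) i = ∑ j, w i j * (x i - x j) := by
  unfold weightedLaplacian mulVec dotProduct
  have step : ∀ j : Fin n, (Matrix.of fun i j => if i = j then ∑ k, w i k else -(w i j)) i j * x j
      = (if i = j then (∑ k, w i k) else 0) * x j + -(w i j) * x j := by
    intro j
    by_cases h : i = j
    · subst h; simp [hdiag i]
    · simp [h]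
  rw [Finset.sum_congr rfl fun j _ => step j]
  rw [Finset.sum_add_distrib]
  simp only [ite_mul, zero_mul, Finset.sum_ite_eq, Finset.mem_univ, if_true]
  simp only [mul_sub, Finset.sum_sub_distrib, neg_mul, Finset.sum_neg_distrib,
    Finset.sum_mul]
  ring

lemma wl_quad (hsym : ∀ i j, w i j = w j i) (hdiag : ∀ i, w i i = 0) (x : Fin n → ℝ) :
    2 * (x ⬝ᵥ (weightedLaplacian w *ᵥ x)) = ∑ i, ∑ j, w i j * (x i - x j) ^ 2 := by
  have h1 : x ⬝ᵥ (weightedLaplacian w *ᵥ x) = ∑ i, ∑ j, w i j * (x i - x j) * x i := by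
    unfold dotProduct
    apply Finset.sum_congr rfl
    intro i _
    rw [wl_mulVec w hdiag, Finset.mul_sum]
    exact Finset.sum_congr rfl fun j _ => by ring
  have h2 : x ⬝ᵥ (weightedLaplacian w *ᵥ x) = ∑ i, ∑ j, -(w i j * (x i - x j) * x j) := by
    rw [h1, Finset.sum_comm]
    apply Finset.sum_congr rfl
    intro i _
    apply Finset.sum_congr rfl
    intro j _
    rw [hsym j i]
    ring
  calc 2 * (x ⬝ᵥ (weightedLaplacian w *ᵥ x))
      = (∑ i, ∑ j, w i j * (x i - x j) * x i) + ∑ i, ∑ j, -(w i j * (x i - x j) * x j) := by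
        rw [← h1, ← h2]; ring
    _ = ∑ i, ∑ j, w i j * (x i - x j) ^ 2 := by
        rw [← Finset.sum_add_distrib]
        apply Finset.sum_congr rfl
        intro i _
        rw [← Finset.sum_add_distrib]
        exact Finset.sum_congr rfl fun j _ => by ring

lemma wl_herm (hsym : ∀ i j, w i j = w j i) : (weightedLaplacian w).IsHermitian := by
  ext i j
  simp only [weightedLaplacian, conjTranspose_apply, Matrix.of_apply, star_trivial]
  by_cases h : i = j
  · subst h; simp
  · simp [h, Ne.symm h, hsym j i]

lemma grounded_posDef (hsym : ∀ i j, w i j = w j i) (hdiag : ∀ i, w i i = 0)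
    (hnonneg : ∀ i j, 0 ≤ w i j)
    (hconn : (SimpleGraph.fromRel (fun i j => 0 < w i j)).Connected)
    (S : Finset (Fin n)) (hS : S.Nonempty) :
    ((weightedLaplacian w).submatrix
      (fun i : {v : Fin n // v ∉ S} => (i : Fin n))
      (fun j : {v : Fin n // v ∉ S} => (j : Fin n))).PosDef := by
  set c : {v : Fin n // v ∉ S} → Fin n := fun i => (i : Fin n) with hc
  have hcinj : Function.Injective c := Subtype.coe_injective
  refine posDef_iff_dotProduct_mulVec.mpr ⟨?_, ?_⟩
  · have := wl_herm w hsym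
    unfold IsHermitian at this ⊢
    rw [conjTranspose_submatrix, this]
  · intro x hx
    set x' : Fin n → ℝ := extVec c x with hx'
    have hform : x ⬝ᵥ ((weightedLaplacian w).submatrix c c *ᵥ x)
        = x' ⬝ᵥ (weightedLaplacian w *ᵥ x') := (extVec_quad _ c x).symm
    have hquad := wl_quad w hsym hdiag x'
    have hterm_nonneg : ∀ i ∈ (Finset.univ : Finset (Fin n)), 0 ≤ ∑ j, w i j * (x' i - x' j) ^ 2 :=
      fun i _ => Finset.sum_nonneg fun j _ => mul_nonneg (hnonneg i j) (sq_nonneg _)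
    have hnn : 0 ≤ x' ⬝ᵥ (weightedLaplacian w *ᵥ x') := by
      nlinarith [Finset.sum_nonneg hterm_nonneg]
    simp only [star_trivial]
    rw [hform]
    rcases lt_or_eq_of_le hnn with h | h
    · exact h
    exfalso
    -- quadratic form is zero: all terms vanish
    have hsum0 : ∑ i, ∑ j, w i j * (x' i - x' j) ^ 2 = 0 := by
      rw [← hquad, ← h]; ring
    have hterm0 : ∀ i j : Fin n, w i j * (x' i - x' j) ^ 2 = 0 := by
      intro i j
      have h1 := (Finset.sum_eq_zero_iff_of_nonneg hterm_nonneg).mp hsum0 i (Finset.mem_univ i)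
      have h2 := (Finset.sum_eq_zero_iff_of_nonneg
        (fun j _ => mul_nonneg (hnonneg i j) (sq_nonneg (x' i - x' j)))).mp h1 j (Finset.mem_univ j)
      exact h2
    have hstep : ∀ i j : Fin n, 0 < w i j → x' i = x' j := by
      intro i j hw
      have := hterm0 i j
      have h2 : (x' i - x' j) ^ 2 = 0 := by
        rcases mul_eq_zero.mp this with h | h
        · exact absurd h hw.ne'
        · exact h
      have := pow_eq_zero_iff (n := 2) (by norm_num) |>.mp h2
      linarith [sub_eq_zero.mp this]
    have hwalk : ∀ (u v : Fin n)
        (p : (SimpleGraph.fromRel fun i j => 0 < w i j).Walk u v), x' u = x' v := by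
      intro u v p
      induction p with
      | nil => rfl
      | cons h p ih =>
        rw [SimpleGraph.fromRel_adj] at h
        rw [← ih]
        rcases h.2 with hw | hw
        · exact hstep _ _ hw
        · exact (hstep _ _ hw).symm
    have hall : ∀ u v : Fin n, x' u = x' v := by
      intro u v
      obtain ⟨p⟩ := hconn.preconnected u v
      exact hwalk u v p
    obtain ⟨s, hs⟩ := hS
    have hxs : x' s = 0 := extVec_apply_notMem c x (fun k hk =>
      k.2 (by rw [show ((k : Fin n)) = s from hk]; exact hs))
    have hxall : ∀ k : {v : Fin n // v ∉ S}, x k = 0 := by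
      intro k
      have h1 := extVec_apply c hcinj x k
      have h2 := hall (c k) s
      rw [hxs] at h2
      rw [hx'] at h2
      rw [h1] at h2
      exact h2
    exact hx (funext hxall)

end Lap

/-- Monotonicity of the leader-selection objective: enlarging the leader set can
only decrease the trace of the inverse grounded Laplacian. -/
theorem trace_inv_grounded_antitone {n : ℕ} (w : Fin n → Fin n → ℝ)
    (hsym : ∀ i j, w i j = w j i) (hdiag : ∀ i, w i i = 0)
    (hnonneg : ∀ i j, 0 ≤ w i j)
    (hconn : (SimpleGraph.fromRel (fun i j => 0 < w i j)).Connected)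
    (S T : Finset (Fin n)) (hS : S.Nonempty) (hST : S ⊆ T) :
    Matrix.trace
        (((weightedLaplacian w).submatrix
            (fun i : {v : Fin n // v ∉ T} => (i : Fin n))
            (fun j : {v : Fin n // v ∉ T} => (j : Fin n)))⁻¹)
      ≤ Matrix.trace
        (((weightedLaplacian w).submatrix
            (fun i : {v : Fin n // v ∉ S} => (i : Fin n))
            (fun j : {v : Fin n // v ∉ S} => (j : Fin n)))⁻¹) := by
  have hT : T.Nonempty := hS.mono hST
  set f : {v : Fin n // v ∉ T} → {v : Fin n // v ∉ S} :=
    fun i => ⟨(i : Fin n), fun h => i.2 (hST h)⟩ with hf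
  have hfinj : Function.Injective f := by
    intro a b hab
    have h := congrArg Subtype.val hab
    exact Subtype.ext h
  have hA := grounded_posDef w hsym hdiag hnonneg hconn S hS
  have hBsub : ((weightedLaplacian w).submatrix
      (fun i : {v : Fin n // v ∉ S} => (i : Fin n))
      (fun j : {v : Fin n // v ∉ S} => (j : Fin n))).submatrix f f
      = (weightedLaplacian w).submatrix
          (fun i : {v : Fin n // v ∉ T} => (i : Fin n))
          (fun j : {v : Fin n // v ∉ T} => (j : Fin n)) := by
    rw [Matrix.submatrix_submatrix]
    rfl
  have hB := grounded_posDef w hsym hdiag hnonneg hconn T hT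
  have := trace_inv_le hA f hfinj (hBsub ▸ hB)
  rwa [hBsub] at this
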